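/- Let α > 0, m = 1, and let β > 0 be a constant. Let (S, I, R) be a solution of the SIR system with constant transmission rate β, with S(0) > 0 and S(0) + I(0) + R(0) = 1. Suppose that as t → ∞ we have I(t) → 0 and R(t) → R∞ for some real number R∞. Then R∞ = 1 − S(0)·exp(−(β/α)·(R∞ − R(0))). -/

import Mathlib

/-- An SIR model with total population `m`, recovery rate `α`, and transmission
rate `β : ℝ → ℝ` consists of differentiable functions `S, I, R : ℝ → ℝ`
satisfying, for all `t ≥ 0`:
`I'(t) = β(t)·S(t)·I(t)/m − α·I(t)`, `S'(t) = −β(t)·S(t)·I(t)/m`, `R'(t) = α·I(t)`. -/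
def IsSIR (α m : ℝ) (β S I R : ℝ → ℝ) : Prop :=
  Differentiable ℝ S ∧ Differentiable ℝ I ∧ Differentiable ℝ R ∧
  ∀ t : ℝ, 0 ≤ t →
    deriv I t = β t * S t * I t / m - α * I t ∧
    deriv S t = -(β t * S t * I t / m) ∧
    deriv R t = α * I t

theorem stmt_4 (α β : ℝ) (hα : 0 < α) (hβ : 0 < β)
    (S I R : ℝ → ℝ) (h : IsSIR α 1 (fun _ => β) S I R)
    (hS0 : 0 < S 0) (hsum : S 0 + I 0 + R 0 = 1)
    (Rinf : ℝ)
    (hI : Filter.Tendsto I Filter.atTop (nhds 0))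
    (hR : Filter.Tendsto R Filter.atTop (nhds Rinf)) :
    Rinf = 1 - S 0 * Real.exp (-(β / α) * (Rinf - R 0)) := by
  obtain ⟨hS, hIdiff, hRdiff, hode⟩ := h
  set c := β / α with hc
  -- auxiliary function g is constant on [0, ∞)
  set g : ℝ → ℝ := fun t => S t * Real.exp (c * (R t - R 0)) with hg
  have gder : ∀ t : ℝ, 0 ≤ t → HasDerivAt g 0 t := by
    intro t ht
    obtain ⟨hI', hS', hR'⟩ := hode t ht
    have h2 : HasDerivAt (fun t => c * (R t - R 0)) (c * deriv R t) t :=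
      (((hRdiff t).hasDerivAt).sub_const (R 0)).const_mul c
    have h3 := h2.exp
    have h4 := ((hS t).hasDerivAt).mul h3
    refine h4.congr_deriv (Eq.symm ?_)
    rw [hS', hR']
    simp only []
    field_simp [hc]
    have hca : c * α = β := by rw [hc]; exact div_mul_cancel₀ β hα.ne'
    linear_combination (-(S t * I t * Real.exp (c * (R t - R 0)))) * hca
  have gconst : ∀ t : ℝ, 0 ≤ t → g t = g 0 := by
    intro t ht
    have := constant_of_has_deriv_right_zero (f := g) (a := 0) (b := t)
      (fun x hx => ((gder x hx.1).continuousAt).continuousWithinAt)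
      (fun x hx => (gder x hx.1).hasDerivWithinAt)
    exact this t ⟨ht, le_refl t⟩
  have hg0 : g 0 = S 0 := by simp [hg]
  -- sum is constant
  have sder : ∀ t : ℝ, 0 ≤ t → HasDerivAt (fun t => S t + I t + R t) 0 t := by
    intro t ht
    obtain ⟨hI', hS', hR'⟩ := hode t ht
    have := (((hS t).hasDerivAt.add (hIdiff t).hasDerivAt)).add (hRdiff t).hasDerivAt
    refine this.congr_deriv (Eq.symm ?_)
    rw [hS', hI', hR']; ring
  have sconst : ∀ t : ℝ, 0 ≤ t → S t + I t + R t = 1 := by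
    intro t ht
    have := constant_of_has_deriv_right_zero (f := fun t => S t + I t + R t) (a := 0) (b := t)
      (fun x hx => ((sder x hx.1).continuousAt).continuousWithinAt)
      (fun x hx => (sder x hx.1).hasDerivWithinAt)
    have h5 := this t ⟨ht, le_refl t⟩
    simpa [hsum] using h5
  -- S t = S 0 * exp (-(c) * (R t - R 0)) for t ≥ 0
  have hSeq : ∀ t : ℝ, 0 ≤ t → S t = S 0 * Real.exp (-c * (R t - R 0)) := by
    intro t ht
    have := gconst t ht
    rw [hg0] at this
    have hexp : Real.exp (c * (R t - R 0)) ≠ 0 := Real.exp_ne_zero _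
    simp only [hg] at this; rw [neg_mul]
    rw [Real.exp_neg, eq_mul_inv_iff_mul_eq₀ hexp]
    exact this
  -- limits
  have hlim1 : Filter.Tendsto S Filter.atTop (nhds (1 - 0 - Rinf)) := by
    have : Filter.Tendsto (fun t => 1 - I t - R t) Filter.atTop (nhds (1 - 0 - Rinf)) :=
      (Filter.Tendsto.const_sub 1 hI).sub hR
    apply this.congr'
    filter_upwards [Filter.eventually_ge_atTop (0 : ℝ)] with t ht
    have := sconst t ht; linarith
  have hlim2 : Filter.Tendsto S Filter.atTop
      (nhds (S 0 * Real.exp (-c * (Rinf - R 0)))) := by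
    have hcont : Filter.Tendsto (fun t => S 0 * Real.exp (-c * (R t - R 0)))
        Filter.atTop (nhds (S 0 * Real.exp (-c * (Rinf - R 0)))) := by
      exact (Real.continuous_exp.tendsto _).comp
        (((hR.sub_const (R 0)).const_mul (-c))) |>.const_mul (S 0)
    apply hcont.congr'
    filter_upwards [Filter.eventually_ge_atTop (0 : ℝ)] with t ht
    exact (hSeq t ht).symm
  have := tendsto_nhds_unique hlim1 hlim2
  linarith
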